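/- (Cubic growth in α.) There exists a universal constant C > 0 such that for every h ∈ [0, 1), writing α = arccos h ∈ (0, π/2], one has ℰ_h(α/π) ≤ C α³. -/

import Mathlib

open Real MeasureTheory Filter Topology
open scoped ENNReal NNReal

noncomputable section

/-- `k = min {h, 1}`. -/
def kparam (h : ℝ) : ℝ := min h 1

/-- `α = arccos k ∈ [0, π/2]`. -/
def alphaParam (h : ℝ) : ℝ := Real.arccos (kparam h)

/-- The anisotropy potential `W_h(θ) = (1/2)(cos²θ − 2h cos θ + 2hk − k²)`. -/
def Wpot (h θ : ℝ) : ℝ :=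
  (1/2) * ((Real.cos θ)^2 - 2*h*Real.cos θ + 2*h*(kparam h) - (kparam h)^2)

/-- The set `2πℤ + {−α, α}` of allowed limits at `±∞`. -/
def limSet (h : ℝ) : Set ℝ :=
  {y | ∃ n : ℤ, y = 2*Real.pi*n + alphaParam h ∨ y = 2*Real.pi*n - alphaParam h}

/-- The total energy `E_h(φ)`, valued in `[0, ∞]`:
exchange + anisotropy energy plus the stray-field (homogeneous `H^{1/2}`) energy. -/
def energy (h : ℝ) (φ : ℝ → ℝ) : ℝ≥0∞ :=
  ENNReal.ofReal (1/2) *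
      (∫⁻ x : ℝ, ENNReal.ofReal ((deriv φ x)^2 + 2 * Wpot h (φ x))) +
    ENNReal.ofReal (1/(4*Real.pi)) *
      (∫⁻ s : ℝ, ∫⁻ t : ℝ,
        ENNReal.ofReal ((Real.cos (φ s) - Real.cos (φ t))^2 / (s - t)^2))

/-- An admissible phase: `C¹`, limits at `±∞` in `2πℤ + {−α, α}`, finite energy. -/
def Admissible (h : ℝ) (φ : ℝ → ℝ) : Prop :=
  ContDiff ℝ 1 φ ∧
    (∃ L ∈ limSet h, Tendsto φ atTop (𝓝 L)) ∧
    (∃ L ∈ limSet h, Tendsto φ atBot (𝓝 L)) ∧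
    energy h φ < ⊤

/-- The winding number `deg(φ) = (φ(+∞) − φ(−∞))/(2π)`. -/
def deg (φ : ℝ → ℝ) : ℝ :=
  (limUnder atTop φ - limUnder atBot φ) / (2*Real.pi)

/-- `𝒜_h(d)`: admissible phases of winding number `d`. -/
def AA (h d : ℝ) : Set (ℝ → ℝ) := {φ | Admissible h φ ∧ deg φ = d}

/-- `ℰ_h(d) = inf {E_h(φ) : φ ∈ 𝒜_h(d)}`. -/
def Einf (h d : ℝ) : ℝ≥0∞ := ⨅ φ ∈ AA h d, energy h φ

/-- `D_α = {n + j·α/π : n ∈ ℤ, j ∈ {−1, 0, 1}}`. -/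
def Dset (h : ℝ) : Set ℝ :=
  {d | ∃ n j : ℤ, (j = -1 ∨ j = 0 ∨ j = 1) ∧ d = n + j * alphaParam h / Real.pi}

namespace CubicAux

/-- Universal bound for the derivative of the smooth transition function. -/
def Mc : ℝ := max 1 (sSup ((fun u => |deriv Real.smoothTransition u|) '' Set.Icc 0 1))

lemma Mc_ge_one : 1 ≤ Mc := le_max_left _ _
lemma Mc_pos : 0 < Mc := lt_of_lt_of_le one_pos Mc_ge_one

lemma contT : ContDiff ℝ 1 Real.smoothTransition := Real.smoothTransition.contDiff

lemma diffT : Differentiable ℝ Real.smoothTransition := contT.differentiable one_ne_zero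

lemma derivT_eq_zero {y : ℝ} (hy : y ≤ 0 ∨ 1 ≤ y) : deriv Real.smoothTransition y = 0 := by
  rcases hy with hy | hy
  · refine IsLocalMin.deriv_eq_zero ?_
    refine Filter.Eventually.of_forall fun x => ?_
    rw [Real.smoothTransition.zero_of_nonpos hy]
    exact Real.smoothTransition.nonneg x
  · refine IsLocalMax.deriv_eq_zero ?_
    refine Filter.Eventually.of_forall fun x => ?_
    rw [Real.smoothTransition.one_of_one_le hy]
    exact Real.smoothTransition.le_one x

lemma derivT_le (u : ℝ) : |deriv Real.smoothTransition u| ≤ Mc := by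
  rcases le_or_gt u 0 with h | h
  · rw [derivT_eq_zero (Or.inl h)]; simpa using le_trans zero_le_one Mc_ge_one
  rcases le_or_gt 1 u with h1 | h1
  · rw [derivT_eq_zero (Or.inr h1)]; simpa using le_trans zero_le_one Mc_ge_one
  · refine le_trans (le_csSup ?_ ?_) (le_max_right _ _)
    · exact (isCompact_Icc.image
        (continuous_abs.comp (contT.continuous_deriv le_rfl))).bddAbove
    · exact ⟨u, ⟨h.le, h1.le⟩, rfl⟩

/-- The Cauchy-type lintegral. -/
lemma lintegral_cauchy {r c : ℝ} (hr : 0 < r) (hc : 0 ≤ c) :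
    ∫⁻ u : ℝ, ENNReal.ofReal (c / (r^2 + u^2)) = ENNReal.ofReal (c * π / r) := by
  have hr2 : (0:ℝ) < r^2 := by positivity
  have hrw : ∀ u : ℝ, c / (r^2 + u^2) = (c/r^2) * (1 + (u * r⁻¹)^2)⁻¹ := by
    intro u
    have hpos : (0:ℝ) < r^2 + u^2 := by positivity
    field_simp
  simp_rw [hrw]
  have hmeas : Measurable fun u : ℝ => ENNReal.ofReal ((1 + (u * r⁻¹)^2)⁻¹) := by
    refine ENNReal.measurable_ofReal.comp ?_
    fun_prop
  have hint : Integrable fun u : ℝ => (1 + (u * r⁻¹)^2)⁻¹ :=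
    integrable_inv_one_add_sq.comp_mul_right' (inv_ne_zero hr.ne')
  calc ∫⁻ u : ℝ, ENNReal.ofReal ((c/r^2) * (1 + (u * r⁻¹)^2)⁻¹)
      = ∫⁻ u : ℝ, ENNReal.ofReal (c/r^2) * ENNReal.ofReal ((1 + (u * r⁻¹)^2)⁻¹) := by
        simp_rw [ENNReal.ofReal_mul (by positivity : (0:ℝ) ≤ c/r^2)]
    _ = ENNReal.ofReal (c/r^2) * ∫⁻ u : ℝ, ENNReal.ofReal ((1 + (u * r⁻¹)^2)⁻¹) :=
        lintegral_const_mul _ hmeas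
    _ = ENNReal.ofReal (c/r^2) * ENNReal.ofReal (∫ u : ℝ, (1 + (u * r⁻¹)^2)⁻¹) := by
        rw [ofReal_integral_eq_lintegral_ofReal hint
          (Filter.Eventually.of_forall fun u => by positivity)]
    _ = ENNReal.ofReal (c * π / r) := by
        rw [MeasureTheory.Measure.integral_comp_mul_right (fun v : ℝ => (1 + v^2)⁻¹) r⁻¹,
          integral_univ_inv_one_add_sq, ← ENNReal.ofReal_mul (by positivity : (0:ℝ) ≤ c/r^2)]
        congr 1
        rw [inv_inv, abs_of_pos hr, smul_eq_mul]
        field_simp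

end CubicAux

set_option maxHeartbeats 2000000 in
/-- **Cubic growth in `α`.** There is a universal `C > 0` with
`ℰ_h(α/π) ≤ C α³` for all `h ∈ [0,1)`. -/
theorem cubic_growth :
    ∃ C : ℝ, 0 < C ∧ ∀ h : ℝ, 0 ≤ h → h < 1 →
      Einf h (alphaParam h / Real.pi) ≤ ENNReal.ofReal (C * (alphaParam h)^3) := by
  have hM1 := CubicAux.Mc_ge_one
  have hMpos := CubicAux.Mc_pos
  have hπ := Real.pi_pos
  set M : ℝ := CubicAux.Mc with hMdef
  refine ⟨M^2 + 1/4 + π * M, by nlinarith, ?_⟩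
  intro h hh0 hh1
  set T := Real.smoothTransition with hTdef
  set a : ℝ := Real.arccos h with hadef
  have hka : alphaParam h = a := by
    rw [alphaParam, kparam, min_eq_left hh1.le]
  rw [hka]
  have ha0 : 0 < a := Real.arccos_pos.2 hh1
  have ha2 : a ≤ π/2 := Real.arccos_le_pi_div_two.2 hh0
  have hcos : Real.cos a = h := Real.cos_arccos (by linarith) hh1.le
  have hone : 1 - h ≤ a^2/2 := by
    have := Real.one_sub_sq_div_two_le_cos (x := a)
    linarith [hcos]
  -- the trial profile
  set φ : ℝ → ℝ := fun x => a * (2 * T ((a*x+1)/2) - 1) with hφdef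
  have hd : ∀ x : ℝ, HasDerivAt φ (a^2 * deriv T ((a*x+1)/2)) x := by
    intro x
    have h1 : HasDerivAt (fun x : ℝ => (a*x+1)/2) (a/2) x := by
      have : HasDerivAt (fun x : ℝ => a*x+1) a x := by
        simpa using ((hasDerivAt_id x).const_mul a).add_const 1
      simpa using this.div_const 2
    have h2 : HasDerivAt T (deriv T ((a*x+1)/2)) ((a*x+1)/2) :=
      (CubicAux.diffT _).hasDerivAt
    have h3 := (h2.comp x h1)
    have h4 := ((h3.const_mul 2).sub_const 1).const_mul a
    refine h4.congr_deriv ?_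
    ring
  have hderiv : ∀ x : ℝ, deriv φ x = a^2 * deriv T ((a*x+1)/2) := fun x => (hd x).deriv
  have hφabs : ∀ x : ℝ, |φ x| ≤ a := by
    intro x
    rw [abs_le]
    constructor
    · have := Real.smoothTransition.nonneg ((a*x+1)/2)
      simp only [hφdef]
      nlinarith
    · have := Real.smoothTransition.le_one ((a*x+1)/2)
      simp only [hφdef]
      nlinarith
  have hcosφ : ∀ x : ℝ, h ≤ Real.cos (φ x) ∧ Real.cos (φ x) ≤ 1 := by
    intro x
    refine ⟨?_, Real.cos_le_one _⟩
    rw [← hcos, ← Real.cos_abs (φ x)]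
    exact Real.cos_le_cos_of_nonneg_of_le_pi (abs_nonneg _) (by linarith) (hφabs x)
  have hright : ∀ x : ℝ, 1/a ≤ x → φ x = a := by
    intro x hx
    have h1 : (1:ℝ) ≤ a*x := by
      rw [div_le_iff₀ ha0] at hx; linarith [hx]
    have h2 : (1:ℝ) ≤ (a*x+1)/2 := by linarith
    show a * (2 * T ((a*x+1)/2) - 1) = a
    rw [hTdef, Real.smoothTransition.one_of_one_le h2]
    ring
  have hleft : ∀ x : ℝ, x ≤ -(1/a) → φ x = -a := by
    intro x hx
    have h1 : a*x ≤ -1 := by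
      have : a * x ≤ a * (-(1/a)) := mul_le_mul_of_nonneg_left hx ha0.le
      have h2 : a * (-(1/a)) = -1 := by field_simp
      linarith
    have h2 : (a*x+1)/2 ≤ 0 := by linarith
    show a * (2 * T ((a*x+1)/2) - 1) = -a
    rw [hTdef, Real.smoothTransition.zero_of_nonpos h2]
    ring
  have hd0 : ∀ x : ℝ, x ≤ -(1/a) ∨ 1/a ≤ x → deriv φ x = 0 := by
    intro x hx
    rw [hderiv x, CubicAux.derivT_eq_zero, mul_zero]
    rcases hx with hx | hx
    · left
      have : a * x ≤ -1 := by
        have : a * x ≤ a * (-(1/a)) := mul_le_mul_of_nonneg_left hx ha0.le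
        have h2 : a * (-(1/a)) = -1 := by field_simp
        linarith
      linarith
    · right
      have : (1:ℝ) ≤ a*x := by rw [div_le_iff₀ ha0] at hx; linarith
      linarith
  set I : Set ℝ := Set.Icc (-(1/a)) (1/a) with hIdef
  have hvolI : volume I = ENNReal.ofReal (2/a) := by
    rw [hIdef, Real.volume_Icc]
    congr 1
    ring
  have hnotI : ∀ x : ℝ, x ∉ I → x ≤ -(1/a) ∨ 1/a ≤ x := by
    intro x hx
    rw [hIdef, Set.mem_Icc, not_and_or] at hx
    push_neg at hx
    rcases hx with hx | hx
    · exact Or.inl hx.le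
    · exact Or.inr hx.le
  have hφnotI : ∀ x : ℝ, x ∉ I → φ x = a ∨ φ x = -a := by
    intro x hx
    rcases hnotI x hx with hx | hx
    · exact Or.inr (hleft x hx)
    · exact Or.inl (hright x hx)
  -- `2 W = (cos θ - h)²`
  have hW : ∀ θ : ℝ, 2 * Wpot h θ = (Real.cos θ - h)^2 := by
    intro θ
    rw [Wpot, kparam, min_eq_left hh1.le]
    ring
  ------------------------------------------------------------------
  -- Bound on the first (local) energy term
  ------------------------------------------------------------------
  have hterm1 : (∫⁻ x : ℝ, ENNReal.ofReal ((deriv φ x)^2 + 2 * Wpot h (φ x)))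
      ≤ ENNReal.ofReal ((M^2*a^4 + a^4/4) * (2/a)) := by
    have hb : ∀ x : ℝ, ENNReal.ofReal ((deriv φ x)^2 + 2 * Wpot h (φ x))
        ≤ I.indicator (fun _ => ENNReal.ofReal (M^2*a^4 + a^4/4)) x := by
      intro x
      by_cases hx : x ∈ I
      · rw [Set.indicator_of_mem hx]
        refine ENNReal.ofReal_le_ofReal ?_
        have hT' := CubicAux.derivT_le ((a*x+1)/2)
        have h1 : (deriv φ x)^2 ≤ M^2*a^4 := by
          rw [hderiv x]
          have h2 : (deriv T ((a*x+1)/2))^2 ≤ M^2 := by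
            rw [← sq_abs]
            exact pow_le_pow_left₀ (abs_nonneg _) hT' 2
          nlinarith [sq_nonneg a, sq_nonneg (a^2)]
        have h2 : 2 * Wpot h (φ x) ≤ a^4/4 := by
          rw [hW]
          have := hcosφ x
          nlinarith [this.1, this.2, hone]
        linarith
      · rw [Set.indicator_of_notMem hx]
        have hder : deriv φ x = 0 := hd0 x (hnotI x hx)
        have hcφ : Real.cos (φ x) = h := by
          rcases hφnotI x hx with hφx | hφx
          · rw [hφx, hcos]
          · rw [hφx, Real.cos_neg, hcos]
        have : (deriv φ x)^2 + 2 * Wpot h (φ x) = 0 := by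
          rw [hder, hW, hcφ]; ring
        rw [this]
        simp
    calc (∫⁻ x : ℝ, ENNReal.ofReal ((deriv φ x)^2 + 2 * Wpot h (φ x)))
        ≤ ∫⁻ x : ℝ, I.indicator (fun _ => ENNReal.ofReal (M^2*a^4 + a^4/4)) x :=
          lintegral_mono hb
      _ = ENNReal.ofReal (M^2*a^4 + a^4/4) * volume I := by
          rw [lintegral_indicator measurableSet_Icc, setLIntegral_const]
      _ = ENNReal.ofReal ((M^2*a^4 + a^4/4) * (2/a)) := by
          rw [hvolI, ← ENNReal.ofReal_mul (by positivity)]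
  ------------------------------------------------------------------
  -- Bound on the stray-field term
  ------------------------------------------------------------------
  set f : ℝ → ℝ := fun x => Real.cos (φ x) with hfdef
  set L : ℝ := M * a^3 with hLdef
  set r : ℝ := 1/(M*a) with hrdef
  set δ : ℝ := a^2 with hδdef
  have hr0 : 0 < r := by rw [hrdef]; positivity
  have hLr : L * r = δ := by
    rw [hLdef, hrdef, hδdef]; field_simp
  have hfI : ∀ x : ℝ, x ∉ I → f x = h := by
    intro x hx
    rcases hφnotI x hx with hφx | hφx
    · rw [hfdef]; simp only; rw [hφx, hcos]
    · rw [hfdef]; simp only; rw [hφx, Real.cos_neg, hcos]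
  have hflip : ∀ s t : ℝ, |f s - f t| ≤ L * |s - t| := by
    have hdf : ∀ x : ℝ, HasDerivAt f (-Real.sin (φ x) * (a^2 * deriv T ((a*x+1)/2))) x :=
      fun x => (Real.hasDerivAt_cos (φ x)).comp x (hd x)
    have hdiff : ∀ x : ℝ, x ∈ (Set.univ : Set ℝ) → DifferentiableAt ℝ f x :=
      fun x _ => (hdf x).differentiableAt
    have hbd : ∀ x : ℝ, x ∈ (Set.univ : Set ℝ) → ‖deriv f x‖ ≤ L := by
      intro x _
      rw [(hdf x).deriv]
      have h1 : |(-Real.sin (φ x)) * (a^2 * deriv T ((a*x+1)/2))|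
          = |Real.sin (φ x)| * (a^2 * |deriv T ((a*x+1)/2)|) := by
        rw [abs_mul, abs_neg, abs_mul, abs_of_nonneg (sq_nonneg a)]
      rw [Real.norm_eq_abs, h1]
      have h2 : |Real.sin (φ x)| ≤ a := le_trans (Real.abs_sin_le_abs) (hφabs x)
      have h3 : |deriv T ((a*x+1)/2)| ≤ M := CubicAux.derivT_le _
      calc |Real.sin (φ x)| * (a^2 * |deriv T ((a*x+1)/2)|)
          ≤ a * (a^2 * M) := by
            refine mul_le_mul h2 ?_ (by positivity) ha0.le
            exact mul_le_mul_of_nonneg_left h3 (by positivity)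
        _ = L := by rw [hLdef]; ring
    intro s t
    have := Convex.norm_image_sub_le_of_norm_deriv_le hdiff hbd convex_univ
      (Set.mem_univ t) (Set.mem_univ s)
    simpa [Real.norm_eq_abs] using this
  have hfsup : ∀ s t : ℝ, |f s - f t| ≤ δ := by
    intro s t
    have h1 := hcosφ s
    have h2 := hcosφ t
    rw [abs_sub_le_iff]
    constructor <;> [skip; skip] <;>
      { rw [hδdef]; simp only [hfdef]; nlinarith [h1.1, h1.2, h2.1, h2.2, hone] }
  have hcore : ∀ s t : ℝ, (f s - f t)^2 / (s-t)^2 ≤ 2*δ^2 / (r^2 + (s-t)^2) := by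
    intro s t
    have hD1 : (f s - f t)^2 ≤ L^2 * (s-t)^2 := by
      have := pow_le_pow_left₀ (abs_nonneg (f s - f t)) (hflip s t) 2
      rw [sq_abs, mul_pow, sq_abs] at this
      exact this
    have hD2 : (f s - f t)^2 ≤ δ^2 := by
      have := pow_le_pow_left₀ (abs_nonneg (f s - f t)) (hfsup s t) 2
      rwa [sq_abs] at this
    have hLr2 : L^2 * r^2 = δ^2 := by rw [← mul_pow, hLr]
    have e1 : (f s - f t)^2 * r^2 ≤ δ^2 * (s-t)^2 := by
      calc (f s - f t)^2 * r^2 ≤ (L^2 * (s-t)^2) * r^2 :=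
            mul_le_mul_of_nonneg_right hD1 (sq_nonneg r)
        _ = δ^2 * (s-t)^2 := by rw [← hLr2]; ring
    have e2 : (f s - f t)^2 * (s-t)^2 ≤ δ^2 * (s-t)^2 :=
      mul_le_mul_of_nonneg_right hD2 (sq_nonneg _)
    have key : (f s - f t)^2 * (r^2 + (s-t)^2) ≤ 2*δ^2 * (s-t)^2 := by
      calc (f s - f t)^2 * (r^2 + (s-t)^2)
          = (f s - f t)^2 * r^2 + (f s - f t)^2 * (s-t)^2 := by ring
        _ ≤ δ^2 * (s-t)^2 + δ^2 * (s-t)^2 := add_le_add e1 e2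
        _ = 2*δ^2 * (s-t)^2 := by ring
    rcases eq_or_ne (s - t) 0 with hu | hu
    · rw [hu]
      simp only [ne_eq, OfNat.ofNat_ne_zero, not_false_eq_true, zero_pow, div_zero]
      positivity
    · have hu2 : 0 < (s-t)^2 := lt_of_le_of_ne (sq_nonneg _) (Ne.symm (pow_ne_zero 2 hu))
      rw [div_le_div_iff₀ hu2 (by positivity)]
      linarith [key]
  set m : ℝ → ℝ≥0∞ := fun u => ENNReal.ofReal (2*δ^2 / (r^2 + u^2)) with hmdef
  have hm_cont : Continuous fun u : ℝ => 2*δ^2 / (r^2 + u^2) := by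
    refine continuous_const.div (by fun_prop) fun u => by positivity
  have hm_meas : Measurable m := ENNReal.measurable_ofReal.comp hm_cont.measurable
  have hm_symm : ∀ s t : ℝ, m (s - t) = m (t - s) := by
    intro s t
    rw [hmdef]
    simp only
    rw [show (s-t)^2 = (t-s)^2 by ring]
  have hS : (∫⁻ u : ℝ, m u) = ENNReal.ofReal (2*π*M*a^5) := by
    rw [hmdef]
    simp only
    rw [CubicAux.lintegral_cauchy hr0 (by positivity)]
    congr 1
    rw [hδdef, hrdef]
    field_simp
  -- pointwise bound for the double integrand
  have hpt : ∀ s t : ℝ, ENNReal.ofReal ((f s - f t)^2 / (s-t)^2)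
      ≤ (if s ∈ I then m (s-t) else 0) + (if t ∈ I then m (s-t) else 0) := by
    intro s t
    by_cases hs : s ∈ I
    · rw [if_pos hs]
      exact le_add_right (ENNReal.ofReal_le_ofReal (hcore s t))
    · by_cases ht : t ∈ I
      · rw [if_pos ht]
        exact le_add_left (ENNReal.ofReal_le_ofReal (hcore s t))
      · rw [hfI s hs, hfI t ht]
        simp
  have hP2meas : Measurable (Function.uncurry fun s t : ℝ => if t ∈ I then m (s-t) else 0) := by
    refine Measurable.ite ?_ ?_ measurable_const
    · exact measurable_snd measurableSet_Icc
    · exact hm_meas.comp (measurable_fst.sub measurable_snd)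
  have hterm2 : (∫⁻ s : ℝ, ∫⁻ t : ℝ, ENNReal.ofReal ((f s - f t)^2 / (s-t)^2))
      ≤ ENNReal.ofReal (8*π*M*a^4) := by
    have step1 : (∫⁻ s : ℝ, ∫⁻ t : ℝ, ENNReal.ofReal ((f s - f t)^2 / (s-t)^2))
        ≤ ∫⁻ s : ℝ, ∫⁻ t : ℝ,
            ((if s ∈ I then m (s-t) else 0) + (if t ∈ I then m (s-t) else 0)) :=
      lintegral_mono fun s => lintegral_mono fun t => hpt s t
    have inner_eq : ∀ s : ℝ, (∫⁻ t : ℝ,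
        ((if s ∈ I then m (s-t) else 0) + (if t ∈ I then m (s-t) else 0)))
        = (if s ∈ I then (∫⁻ u : ℝ, m u) else 0)
          + ∫⁻ t : ℝ, (if t ∈ I then m (s-t) else 0) := by
      intro s
      rw [lintegral_add_left]
      · congr 1
        by_cases hs : s ∈ I
        · simp only [if_pos hs]
          calc (∫⁻ t : ℝ, m (s - t)) = ∫⁻ t : ℝ, m (t - s) := by
                refine lintegral_congr fun t => hm_symm s t
            _ = ∫⁻ u : ℝ, m u := lintegral_sub_right_eq_self m s
        · simp [hs]
      · by_cases hs : s ∈ I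
        · simp only [if_pos hs]
          exact hm_meas.comp (measurable_const.sub measurable_id)
        · simp only [if_neg hs]; exact measurable_const
    have swap : (∫⁻ s : ℝ, ∫⁻ t : ℝ, (if t ∈ I then m (s-t) else 0))
        = ∫⁻ t : ℝ, ∫⁻ s : ℝ, (if t ∈ I then m (s-t) else 0) :=
      lintegral_lintegral_swap hP2meas.aemeasurable
    have inner2 : ∀ t : ℝ, (∫⁻ s : ℝ, (if t ∈ I then m (s-t) else 0))
        = (if t ∈ I then (∫⁻ u : ℝ, m u) else 0) := by
      intro t
      by_cases ht : t ∈ I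
      · simp only [if_pos ht]
        exact lintegral_sub_right_eq_self m t
      · simp [ht]
    have indic : (∫⁻ x : ℝ, (if x ∈ I then (∫⁻ u : ℝ, m u) else 0))
        = (∫⁻ u : ℝ, m u) * volume I := by
      have : (fun x : ℝ => if x ∈ I then (∫⁻ u : ℝ, m u) else 0)
          = I.indicator (fun _ => (∫⁻ u : ℝ, m u)) := by
        funext x
        rw [Set.indicator_apply]
      rw [this, lintegral_indicator measurableSet_Icc, setLIntegral_const]
    calc (∫⁻ s : ℝ, ∫⁻ t : ℝ, ENNReal.ofReal ((f s - f t)^2 / (s-t)^2))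
        ≤ ∫⁻ s : ℝ, ∫⁻ t : ℝ,
            ((if s ∈ I then m (s-t) else 0) + (if t ∈ I then m (s-t) else 0)) := step1
      _ = ∫⁻ s : ℝ, ((if s ∈ I then (∫⁻ u : ℝ, m u) else 0)
            + ∫⁻ t : ℝ, (if t ∈ I then m (s-t) else 0)) := lintegral_congr inner_eq
      _ = (∫⁻ s : ℝ, (if s ∈ I then (∫⁻ u : ℝ, m u) else 0))
            + ∫⁻ s : ℝ, ∫⁻ t : ℝ, (if t ∈ I then m (s-t) else 0) := by
          rw [lintegral_add_left]
          refine Measurable.ite measurableSet_Icc measurable_const measurable_const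
      _ = (∫⁻ u : ℝ, m u) * volume I + (∫⁻ u : ℝ, m u) * volume I := by
          rw [indic, swap]
          congr 1
          rw [lintegral_congr inner2, indic]
      _ ≤ ENNReal.ofReal (2*π*M*a^5) * ENNReal.ofReal (2/a)
            + ENNReal.ofReal (2*π*M*a^5) * ENNReal.ofReal (2/a) := by
          rw [hS, hvolI]
      _ = ENNReal.ofReal (8*π*M*a^4) := by
          rw [← ENNReal.ofReal_mul (by positivity), ← two_mul,
            show ((2:ℝ≥0∞)) = ENNReal.ofReal (2:ℝ) by simp,
            ← ENNReal.ofReal_mul (by norm_num)]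
          congr 1
          field_simp
          ring
  ------------------------------------------------------------------
  -- Total energy bound
  ------------------------------------------------------------------
  have hEn : energy h φ ≤ ENNReal.ofReal ((M^2 + 1/4 + π*M) * a^3) := by
    have hE1 : ENNReal.ofReal (1/2) *
        (∫⁻ x : ℝ, ENNReal.ofReal ((deriv φ x)^2 + 2 * Wpot h (φ x)))
        ≤ ENNReal.ofReal ((M^2 + 1/4) * a^3) := by
      calc ENNReal.ofReal (1/2) *
          (∫⁻ x : ℝ, ENNReal.ofReal ((deriv φ x)^2 + 2 * Wpot h (φ x)))
          ≤ ENNReal.ofReal (1/2) * ENNReal.ofReal ((M^2*a^4 + a^4/4) * (2/a)) :=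
            mul_le_mul_right hterm1 _
        _ = ENNReal.ofReal ((M^2 + 1/4) * a^3) := by
            rw [← ENNReal.ofReal_mul (by norm_num)]
            congr 1
            field_simp
    have hE2 : ENNReal.ofReal (1/(4*π)) *
        (∫⁻ s : ℝ, ∫⁻ t : ℝ, ENNReal.ofReal ((Real.cos (φ s) - Real.cos (φ t))^2 / (s-t)^2))
        ≤ ENNReal.ofReal (π*M * a^3) := by
      have : (∫⁻ s : ℝ, ∫⁻ t : ℝ,
          ENNReal.ofReal ((Real.cos (φ s) - Real.cos (φ t))^2 / (s-t)^2))
          = ∫⁻ s : ℝ, ∫⁻ t : ℝ, ENNReal.ofReal ((f s - f t)^2 / (s-t)^2) := rfl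
      rw [this]
      calc ENNReal.ofReal (1/(4*π)) *
          (∫⁻ s : ℝ, ∫⁻ t : ℝ, ENNReal.ofReal ((f s - f t)^2 / (s-t)^2))
          ≤ ENNReal.ofReal (1/(4*π)) * ENNReal.ofReal (8*π*M*a^4) :=
            mul_le_mul_right hterm2 _
        _ = ENNReal.ofReal (2*M*a^4) := by
            rw [← ENNReal.ofReal_mul (by positivity)]
            congr 1
            field_simp
            ring
        _ ≤ ENNReal.ofReal (π*M * a^3) := by
            refine ENNReal.ofReal_le_ofReal ?_
            calc 2*M*a^4 = (2*M*a^3)*a := by ring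
              _ ≤ (2*M*a^3)*(π/2) := mul_le_mul_of_nonneg_left ha2 (by positivity)
              _ = π*M*a^3 := by ring
    calc energy h φ
        ≤ ENNReal.ofReal ((M^2 + 1/4) * a^3) + ENNReal.ofReal (π*M * a^3) :=
          add_le_add hE1 hE2
      _ = ENNReal.ofReal ((M^2 + 1/4 + π*M) * a^3) := by
          rw [← ENNReal.ofReal_add (by positivity) (by positivity)]
          congr 1
          ring
  ------------------------------------------------------------------
  -- φ is admissible with winding number a/π
  ------------------------------------------------------------------
  have htop : Tendsto φ atTop (𝓝 a) := by
    refine Tendsto.congr' ?_ tendsto_const_nhds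
    filter_upwards [eventually_ge_atTop (1/a)] with x hx
    exact (hright x hx).symm
  have hbot : Tendsto φ atBot (𝓝 (-a)) := by
    refine Tendsto.congr' ?_ tendsto_const_nhds
    filter_upwards [eventually_le_atBot (-(1/a))] with x hx
    exact (hleft x hx).symm
  have hmem : φ ∈ AA h (a / π) := by
    constructor
    · refine ⟨?_, ⟨a, ⟨0, ?_⟩, htop⟩, ⟨-a, ⟨0, ?_⟩, hbot⟩, ?_⟩
      · have hin : ContDiff ℝ 1 (fun x : ℝ => (a*x+1)/2) :=
          ((contDiff_const.mul contDiff_id).add contDiff_const).div_const 2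
        exact contDiff_const.mul
          ((contDiff_const.mul (CubicAux.contT.comp hin)).sub contDiff_const)
      · left; rw [hka]; push_cast; ring
      · right; rw [hka]; push_cast; ring
      · exact lt_of_le_of_lt hEn ENNReal.ofReal_lt_top
    · rw [deg, htop.limUnder_eq, hbot.limUnder_eq]
      field_simp
      ring
  calc Einf h (a / π) ≤ energy h φ := iInf₂_le φ hmem
    _ ≤ ENNReal.ofReal ((M^2 + 1/4 + π*M) * a^3) := hEn
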